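/- Let B, C be base hierarchies with min B ≤ min C, let n ≥ min B, and let b = base_B(n). The witness c for the upgrade ↑_B^C(n) exists if and only if there is a least c' ∈ C such that c' ≥ ↑b and ⌈b→c'⌉(n) < S_C(c'); and in that case c' = c. -/

import Mathlib

set_option maxHeartbeats 1000000

/-- `n =_b b^e·a + r` is the `b`-decomposition of `n`. -/
def BDecomp (b n e a r : ℕ) : Prop :=
  n = b ^ e * a + r ∧ b ^ e ≤ n ∧ n < b ^ (e + 1) ∧ 0 < a ∧ a < b ∧ r < b ^ e

/-- `c = S_B(b)`, the successor of `b` in `B` (when it exists). -/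
def SuccIn (B : Set ℕ) (b c : ℕ) : Prop := IsLeast {x | x ∈ B ∧ b < x} c

/-- A base hierarchy: a nonempty set of naturals `≥ 2` in which every element
divides its successor (`b ∣ S_B(b)`; vacuous when `S_B(b) = ∞`). -/
def IsBaseHierarchy (B : Set ℕ) : Prop :=
  B.Nonempty ∧ (∀ b ∈ B, 2 ≤ b) ∧ ∀ b ∈ B, ∀ c, SuccIn B b c → b ∣ c

/-- `b = base_B(n)`: the largest element of `B` that is `≤ n`, or `min B` if
`n < min B`. -/
def IsBaseOf (B : Set ℕ) (n b : ℕ) : Prop :=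
  ((∃ x ∈ B, x ≤ n) ∧ IsGreatest {x | x ∈ B ∧ x ≤ n} b) ∨
  ((∀ x ∈ B, n < x) ∧ IsLeast B b)

/-- `n` is `B`-critical if `base_B(n) ∣ n`. -/
def Critical (B : Set ℕ) (n : ℕ) : Prop := ∃ b, IsBaseOf B n b ∧ b ∣ n

/-- `ChgGood Up Chg C n b c`: the base `c` "works" for upgrading `n`:
`↑(n−1) < ⌈b→c⌉(n) < S_C(c)`. -/
def ChgGood (Up : ℕ → ℕ → Prop) (Chg : ℕ → ℕ → ℕ → ℕ → Prop) (C : Set ℕ)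
    (n b c : ℕ) : Prop :=
  ∃ p k, Up (n - 1) p ∧ Chg b c n k ∧ p < k ∧ ∀ d, SuccIn C c d → k < d

/-- `c` is the witness for `↑n`: the least element of `C` with
`↑(n−1) < ⌈b→c⌉(n) < S_C(c)`. -/
def IsWitness (Up : ℕ → ℕ → Prop) (Chg : ℕ → ℕ → ℕ → ℕ → Prop) (C : Set ℕ)
    (n b c : ℕ) : Prop :=
  c ∈ C ∧ ChgGood Up Chg C n b c ∧
    ∀ c' ∈ C, c' < c → ¬ ChgGood Up Chg C n b c'

/-- Let `B, C` be base hierarchies with `min B ≤ min C`,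
`n ≥ min B` and `b = base_B(n)`.  The (partial) upgrade `↑ = ↑_B^C` and base
change `⌈b→c⌉` are modelled as relations `Up`, `Chg` characterized by their
defining equations.  Then the witness `c` for `↑n` exists iff there is a least
`c' ∈ C` with `c' ≥ ↑b` and `⌈b→c'⌉(n) < S_C(c')`, and in that case `c' = c`. -/
theorem stmt18 (B C : Set ℕ) (hB : IsBaseHierarchy B) (hC : IsBaseHierarchy C)
    (hmin : ∀ mB mC, IsLeast B mB → IsLeast C mC → mB ≤ mC)
    (Up : ℕ → ℕ → Prop) (Chg : ℕ → ℕ → ℕ → ℕ → Prop)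
    (hUp_small : ∀ n m, (∀ x ∈ B, n < x) → (Up n m ↔ m = n))
    (hChg_small : ∀ b c m k, m < b → (Chg b c m k ↔ Up m k))
    (hChg_big : ∀ b c m k, b ≤ m →
      (Chg b c m k ↔ ∃ e a r, BDecomp b m e a r ∧
        ∃ e' a' r', Chg b c e e' ∧ Up a a' ∧ Chg b c r r' ∧
          k = c ^ e' * a' + r'))
    (hUp_big : ∀ n, (∃ x ∈ B, x ≤ n) → ∀ b, IsBaseOf B n b → ∀ m,
      (Up n m ↔ ∃ c, IsWitness Up Chg C n b c ∧ Chg b c n m))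
    (n b : ℕ) (hn : ∃ x ∈ B, x ≤ n) (hb : IsBaseOf B n b) :
    ((∃ c, IsWitness Up Chg C n b c) ↔
      ∃ c', IsLeast {x | x ∈ C ∧ (∃ ub, Up b ub ∧ ub ≤ x) ∧
        ∃ k, Chg b x n k ∧ ∀ d, SuccIn C x d → k < d} c') ∧
    (∀ c c', IsWitness Up Chg C n b c →
      IsLeast {x | x ∈ C ∧ (∃ ub, Up b ub ∧ ub ≤ x) ∧
        ∃ k, Chg b x n k ∧ ∀ d, SuccIn C x d → k < d} c' → c' = c) := by
  obtain ⟨hBne, hB2, -⟩ := hB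
  obtain ⟨hCne, hC2, -⟩ := hC
  -- basic facts about b
  have hbfacts : b ∈ B ∧ b ≤ n ∧ ∀ x ∈ B, x ≤ n → x ≤ b := by
    rcases hb with ⟨hex, hg⟩ | ⟨hall, -⟩
    · exact ⟨hg.1.1, hg.1.2, fun x hx hxn => hg.2 ⟨hx, hxn⟩⟩
    · obtain ⟨x, hx, hxn⟩ := hn
      exact absurd hxn (not_le.mpr (hall x hx))
  obtain ⟨hbB, hbn, hbmax⟩ := hbfacts
  have h2b : 2 ≤ b := hB2 b hbB
  have hup0 : ∀ m, Up 0 m ↔ m = 0 :=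
    fun m => hUp_small 0 m (fun x hx => by have := hB2 x hx; omega)
  have hup1 : ∀ m, Up 1 m ↔ m = 1 :=
    fun m => hUp_small 1 m (fun x hx => by have := hB2 x hx; omega)
  have mulpred : ∀ q x : ℕ, 1 ≤ q → 1 ≤ x → q * (x - 1) + (q - 1) + 1 = q * x := by
    intro q x hq hx
    have h := Nat.mul_succ q (x - 1)
    rw [Nat.succ_eq_add_one, show x - 1 + 1 = x by omega] at h
    omega
  have baseAt : ∀ m, b ≤ m → m ≤ n → IsBaseOf B m b := fun m h1 h2 =>
    Or.inl ⟨⟨b, hbB, h1⟩, ⟨⟨hbB, h1⟩, fun x hx => hbmax x hx.1 (hx.2.trans h2)⟩⟩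
  have baseEx : ∀ m, (∃ x ∈ B, x ≤ m) → ∃ β, IsBaseOf B m β ∧ β ∈ B ∧ β ≤ m := by
    intro m hex
    have hne : ({x | x ∈ B ∧ x ≤ m} : Set ℕ).Nonempty := by
      obtain ⟨x, hx, hxm⟩ := hex; exact ⟨x, hx, hxm⟩
    have hbdd : BddAbove {x | x ∈ B ∧ x ≤ m} := ⟨m, fun y hy => hy.2⟩
    have hg : IsGreatest {x | x ∈ B ∧ x ≤ m} (sSup {x | x ∈ B ∧ x ≤ m}) :=
      ⟨Nat.sSup_mem hne hbdd, fun y hy => le_csSup hbdd hy⟩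
    exact ⟨_, Or.inl ⟨hex, hg⟩, hg.1.1, hg.1.2⟩
  have succ_led : ∀ x z, x < z → z ∈ C → ∃ d, SuccIn C x d ∧ d ≤ z := by
    intro x z hxz hz
    have hne : ({w | w ∈ C ∧ x < w} : Set ℕ).Nonempty := ⟨z, hz, hxz⟩
    exact ⟨sInf {w | w ∈ C ∧ x < w},
      ⟨Nat.sInf_mem hne, fun w hw => Nat.sInf_le hw⟩, Nat.sInf_le ⟨hz, hxz⟩⟩
  have wit_uniq : ∀ m β c c', IsWitness Up Chg C m β c → IsWitness Up Chg C m β c' →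
      c = c' := by
    intro m β c c' h h'
    rcases lt_trichotomy c c' with hlt | he | hlt
    · exact absurd h.2.1 (h'.2.2 c h.1 hlt)
    · exact he
    · exact absurd h'.2.1 (h.2.2 c' h'.1 hlt)
  have wit_of_good : ∀ m β x, x ∈ C → ChgGood Up Chg C m β x →
      ∃ c, IsWitness Up Chg C m β c := by
    intro m β x hxC hgood
    have hne : ({y | y ∈ C ∧ ChgGood Up Chg C m β y} : Set ℕ).Nonempty := ⟨x, hxC, hgood⟩
    refine ⟨sInf {y | y ∈ C ∧ ChgGood Up Chg C m β y}, (Nat.sInf_mem hne).1,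
      (Nat.sInf_mem hne).2, ?_⟩
    intro c' hc' hlt hg
    have : sInf {y | y ∈ C ∧ ChgGood Up Chg C m β y} ≤ c' :=
      Nat.sInf_le (show c' ∈ {y | y ∈ C ∧ ChgGood Up Chg C m β y} from ⟨hc', hg⟩)
    omega
  -- decomposition facts
  have bdec_ex : ∀ β m, 2 ≤ β → β ≤ m → ∃ e a r, BDecomp β m e a r := by
    intro β m hβ hβm
    have h1b : 1 < β := hβ
    have hm0 : m ≠ 0 := by omega
    have hle : β ^ Nat.log β m ≤ m := Nat.pow_log_le_self β hm0
    have hlt : m < β ^ (Nat.log β m + 1) := Nat.lt_pow_succ_log_self h1b m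
    have hpos : 0 < β ^ Nat.log β m := pow_pos (by omega) _
    refine ⟨Nat.log β m, m / β ^ Nat.log β m, m % β ^ Nat.log β m,
      (Nat.div_add_mod m (β ^ Nat.log β m)).symm, hle, hlt, ?_, ?_, Nat.mod_lt _ hpos⟩
    · exact (Nat.one_le_div_iff hpos).mpr hle
    · rw [Nat.div_lt_iff_lt_mul hpos]
      calc m < β ^ (Nat.log β m + 1) := hlt
        _ = β * β ^ Nat.log β m := by rw [pow_succ]; ring
  have bdec_uniq : ∀ β m e a r e' a' r', 2 ≤ β → BDecomp β m e a r →
      BDecomp β m e' a' r' → e = e' ∧ a = a' ∧ r = r' := by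
    intro β m e a r e' a' r' hβ h h'
    obtain ⟨hm, hle, hlt, ha0, hab, hr⟩ := h
    obtain ⟨hm', hle', hlt', ha0', hab', hr'⟩ := h'
    have h1β : 1 ≤ β := by omega
    have hee : e = e' := by
      rcases lt_trichotomy e e' with hlt2 | he | hlt2
      · have := Nat.pow_le_pow_right h1β (show e + 1 ≤ e' by omega)
        omega
      · exact he
      · have := Nat.pow_le_pow_right h1β (show e' + 1 ≤ e by omega)
        omega
    subst hee
    have haa : a = a' := by
      rcases lt_trichotomy a a' with h2 | h2 | h2
      · have h3 : β ^ e * (a + 1) ≤ β ^ e * a' := Nat.mul_le_mul_left _ (by omega)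
        rw [Nat.mul_succ] at h3; omega
      · exact h2
      · have h3 : β ^ e * (a' + 1) ≤ β ^ e * a := Nat.mul_le_mul_left _ (by omega)
        rw [Nat.mul_succ] at h3; omega
    subst haa
    exact ⟨rfl, rfl, by omega⟩
  have bdec_epos : ∀ β m e a r, β ≤ m → BDecomp β m e a r → 1 ≤ e := by
    intro β m e a r hβm hd
    by_contra h
    have he : e = 0 := by omega
    subst he
    have h2 := hd.2.2.1
    rw [zero_add, pow_one] at h2
    omega
  -- determinism
  have det : ∀ m, (∀ q q', Up m q → Up m q' → q = q') ∧
      (∀ β c k k', 2 ≤ β → Chg β c m k → Chg β c m k' → k = k') := by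
    intro m
    induction m using Nat.strong_induction_on with
    | _ m IH =>
    have chgbig : ∀ β c k k', 2 ≤ β → β ≤ m → Chg β c m k → Chg β c m k' → k = k' := by
      intro β c k k' hβ hβm h1 h2
      obtain ⟨e, a, r, hd, E, A, R, hE, hA, hR, hkeq⟩ := (hChg_big β c m k hβm).1 h1
      obtain ⟨e', a', r', hd', E', A', R', hE', hA', hR', hkeq'⟩ := (hChg_big β c m k' hβm).1 h2
      obtain ⟨he, ha, hr⟩ := bdec_uniq β m e a r e' a' r' hβ hd hd'
      subst he; subst ha; subst hr
      have hem : e < m := by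
        have h1 : e < 2 ^ e := Nat.lt_two_pow_self
        have h2 := Nat.pow_le_pow_left hβ e
        have h3 := hd.2.1
        omega
      have ham : a < m := by have := hd.2.2.2.2.1; omega
      have hrm : r < m := by have := hd.2.2.2.2.2; have := hd.2.1; omega
      have hEE := (IH e hem).2 β c E E' hβ hE hE'
      have hAA := (IH a ham).1 A A' hA hA'
      have hRR := (IH r hrm).2 β c R R' hβ hR hR'
      subst hEE; subst hAA; subst hRR
      omega
    have updet : ∀ q q', Up m q → Up m q' → q = q' := by
      intro q q' h1 h2
      by_cases hex : ∃ x ∈ B, x ≤ m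
      · obtain ⟨β, hbase, hβB, hβm⟩ := baseEx m hex
        obtain ⟨c, hwit, hchg⟩ := (hUp_big m hex β hbase q).1 h1
        obtain ⟨c', hwit', hchg'⟩ := (hUp_big m hex β hbase q').1 h2
        have hcc : c = c' := wit_uniq m β c c' hwit hwit'
        subst hcc
        exact chgbig β c q q' (hB2 β hβB) hβm hchg hchg'
      · push_neg at hex
        have hsm : ∀ x ∈ B, m < x := fun x hx => by have := hex x hx; omega
        have e1 := (hUp_small m q hsm).1 h1
        have e2 := (hUp_small m q' hsm).1 h2
        omega
    refine ⟨updet, ?_⟩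
    intro β c k k' hβ h1 h2
    rcases Nat.lt_or_ge m β with hmβ | hmβ
    · exact updet k k' ((hChg_small β c m k hmβ).1 h1) ((hChg_small β c m k' hmβ).1 h2)
    · exact chgbig β c k k' hβ hmβ h1 h2
  -- positivity
  have pos : ∀ m, (∀ q, Up m q → 1 ≤ m → 1 ≤ q) ∧
      (∀ β c k, 2 ≤ β → 1 ≤ c → Chg β c m k → 1 ≤ m → 1 ≤ k) := by
    intro m
    induction m using Nat.strong_induction_on with
    | _ m IH =>
    have chgbigpos : ∀ β c k, 2 ≤ β → 1 ≤ c → β ≤ m → Chg β c m k → 1 ≤ k := by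
      intro β c k hβ hc hβm h
      obtain ⟨e, a, r, hd, E, A, R, hE, hA, hR, hkeq⟩ := (hChg_big β c m k hβm).1 h
      have ham : a < m := by have := hd.2.2.2.2.1; omega
      have hA1 : 1 ≤ A := (IH a ham).1 A hA hd.2.2.2.1
      have hcE : 1 ≤ c ^ E := Nat.one_le_pow E c (by omega)
      have hprod : 1 * 1 ≤ c ^ E * A := Nat.mul_le_mul hcE hA1
      omega
    have uppos : ∀ q, Up m q → 1 ≤ m → 1 ≤ q := by
      intro q h hm
      by_cases hex : ∃ x ∈ B, x ≤ m
      · obtain ⟨β, hbase, hβB, hβm⟩ := baseEx m hex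
        obtain ⟨c, hwit, hchg⟩ := (hUp_big m hex β hbase q).1 h
        exact chgbigpos β c q (hB2 β hβB) (by have := hC2 c hwit.1; omega) hβm hchg
      · push_neg at hex
        have hsm : ∀ x ∈ B, m < x := fun x hx => by have := hex x hx; omega
        have := (hUp_small m q hsm).1 h
        omega
    refine ⟨uppos, ?_⟩
    intro β c k hβ hc h hm
    rcases Nat.lt_or_ge m β with hmβ | hmβ
    · exact uppos k ((hChg_small β c m k hmβ).1 h) hm
    · exact chgbigpos β c k hβ hc hmβ h
  -- change of base at the argument b itself
  have bdecb : BDecomp b b 1 1 0 := by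
    refine ⟨by simp [pow_one], by simp [pow_one], ?_, one_pos, by omega, by simp [pow_one]; omega⟩
    rw [pow_succ, pow_one]
    nlinarith
  have chg_at_b_rev : ∀ c, Chg b c b c := by
    intro c
    refine (hChg_big b c b c le_rfl).2 ⟨1, 1, 0, bdecb, 1, 1, 0, ?_, (hup1 1).2 rfl, ?_, by
      simp [pow_one]⟩
    · exact (hChg_small b c 1 1 (by omega)).2 ((hup1 1).2 rfl)
    · exact (hChg_small b c 0 0 (by omega)).2 ((hup0 0).2 rfl)
  have chg_at_b_fwd : ∀ c k, Chg b c b k → k = c := by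
    intro c k h
    obtain ⟨e, a, r, hd, E, A, R, hE, hA, hR, hkeq⟩ := (hChg_big b c b k le_rfl).1 h
    obtain ⟨he, ha, hr⟩ := bdec_uniq b b 1 1 0 e a r h2b bdecb hd
    subst he; subst ha; subst hr
    have hE1 : E = 1 := (hup1 E).1 ((hChg_small b c 1 E (by omega)).1 hE)
    have hA1 : A = 1 := (hup1 A).1 hA
    have hR0 : R = 0 := (hup0 R).1 ((hChg_small b c 0 R (by omega)).1 hR)
    subst hE1; subst hA1; subst hR0
    simp [pow_one] at hkeq
    omega
  have chg_ge : ∀ m c k, b ≤ m → 1 ≤ c → Chg b c m k → c ≤ k := by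
    intro m c k hbm hc h
    obtain ⟨e, a, r, hd, E, A, R, hE, hA, hR, hkeq⟩ := (hChg_big b c m k hbm).1 h
    have he1 : 1 ≤ e := bdec_epos b m e a r hbm hd
    have hE1 : 1 ≤ E := (pos e).2 b c E h2b hc hE he1
    have hA1 : 1 ≤ A := (pos a).1 A hA hd.2.2.2.1
    have h1 : c ≤ c ^ E := Nat.le_self_pow (by omega) c
    have h2 : c ^ E ≤ c ^ E * A := Nat.le_mul_of_pos_right _ (by omega)
    omega
  -- downward closure of the domain of Up
  have up_stepdown : ∀ m q, Up (m + 1) q → ∃ p, Up m p := by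
    intro m q h
    by_cases hex : ∃ x ∈ B, x ≤ m + 1
    · obtain ⟨β, hbase, hβB, hβm⟩ := baseEx (m + 1) hex
      obtain ⟨c, hwit, -⟩ := (hUp_big (m + 1) hex β hbase q).1 h
      obtain ⟨p, k, hp, -, -, -⟩ := hwit.2.1
      exact ⟨p, by simpa using hp⟩
    · push_neg at hex
      exact ⟨m, (hUp_small m m (fun x hx => by have := hex x hx; omega)).2 rfl⟩
  have up_down : ∀ m q, Up m q → ∀ j, j ≤ m → ∃ p, Up j p := by
    intro m
    induction m with
    | zero =>
      intro q h j hj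
      have : j = 0 := by omega
      exact ⟨q, this ▸ h⟩
    | succ m ih =>
      intro q h j hj
      rcases Nat.eq_or_lt_of_le hj with he | hlt
      · exact ⟨q, he ▸ h⟩
      · obtain ⟨p, hp⟩ := up_stepdown m q h
        exact ih p hp j (by omega)
  have up_succ_lt : ∀ m p q, Up m p → Up (m + 1) q → p < q := by
    intro m p q hp hq
    by_cases hex : ∃ x ∈ B, x ≤ m + 1
    · obtain ⟨β, hbase, hβB, hβm⟩ := baseEx (m + 1) hex
      obtain ⟨c, hwit, hchg⟩ := (hUp_big (m + 1) hex β hbase q).1 hq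
      obtain ⟨p', k, hp', hk, hpk, -⟩ := hwit.2.1
      have hpp : p = p' := (det m).1 p p' hp (by simpa using hp')
      have hkq : k = q := (det (m + 1)).2 β c k q (hB2 β hβB) hk hchg
      omega
    · push_neg at hex
      have hsm1 : ∀ x ∈ B, m + 1 < x := fun x hx => by have := hex x hx; omega
      have hsm : ∀ x ∈ B, m < x := fun x hx => by have := hex x hx; omega
      have e1 := (hUp_small m p hsm).1 hp
      have e2 := (hUp_small (m + 1) q hsm1).1 hq
      omega
  -- THE KEY LEMMA: any good base for m (b ≤ m ≤ n) is at least the witness for b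
  have G : ∀ m, b ≤ m → m ≤ n → ∀ x, x ∈ C → ChgGood Up Chg C m b x →
      ∀ cb, IsWitness Up Chg C b b cb → cb ≤ x := by
    intro m
    induction m using Nat.strong_induction_on with
    | _ m IH =>
    intro hbm hmn x hxC hgx cb hwitb
    rcases Nat.eq_or_lt_of_le hbm with heq | hlt
    · by_contra h
      push_neg at h
      exact hwitb.2.2 x hxC h (heq ▸ hgx)
    · obtain ⟨p, k, hp, hk, hpk, hkS⟩ := hgx
      have h1 : b ≤ m - 1 := by omega
      have h2 : m - 1 ≤ n := by omega
      have hexm : ∃ x ∈ B, x ≤ m - 1 := ⟨b, hbB, h1⟩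
      obtain ⟨c₁, hwit₁, hchg₁⟩ := (hUp_big (m - 1) hexm b (baseAt (m - 1) h1 h2) p).1 hp
      have hcb₁ : cb ≤ c₁ := IH (m - 1) (by omega) h1 h2 c₁ hwit₁.1 hwit₁.2.1 cb hwitb
      have hc₁p : c₁ ≤ p :=
        chg_ge (m - 1) c₁ p h1 (by have := hC2 c₁ hwit₁.1; omega) hchg₁
      by_contra h
      push_neg at h
      obtain ⟨d, hd, hdc₁⟩ := succ_led x c₁ (by omega) hwit₁.1
      have := hkS d hd
      omega
  -- totality of Chg b y given Up defined below b
  have chg_total : (∀ j, j < b → ∃ q, Up j q) → ∀ y m, ∃ k, Chg b y m k := by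
    intro hUB y m
    induction m using Nat.strong_induction_on with
    | _ m IH =>
    rcases Nat.lt_or_ge m b with hmb | hmb
    · obtain ⟨q, hq⟩ := hUB m hmb
      exact ⟨q, (hChg_small b y m q hmb).2 hq⟩
    · obtain ⟨e, a, r, hd⟩ := bdec_ex b m h2b hmb
      have hem : e < m := by
        have h1 : e < 2 ^ e := Nat.lt_two_pow_self
        have h2 := Nat.pow_le_pow_left h2b e
        have h3 := hd.2.1
        omega
      have hrm : r < m := by have := hd.2.2.2.2.2; have := hd.2.1; omega
      obtain ⟨E, hE⟩ := IH e hem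
      obtain ⟨R, hR⟩ := IH r hrm
      obtain ⟨A, hA⟩ := hUB a (by have := hd.2.2.2.2.1; omega)
      exact ⟨y ^ E * A + R, (hChg_big b y m _ hmb).2 ⟨e, a, r, hd, E, A, R, hE, hA, hR, rfl⟩⟩
  -- monotonicity in the target base
  have monoBase : ∀ m c d k k', 1 ≤ c → c ≤ d → Chg b c m k → Chg b d m k' → k ≤ k' := by
    intro m
    induction m using Nat.strong_induction_on with
    | _ m IH =>
    intro c d k k' hc hcd hk hk'
    rcases Nat.lt_or_ge m b with hmb | hmb
    · have e1 := (hChg_small b c m k hmb).1 hk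
      have e2 := (hChg_small b d m k' hmb).1 hk'
      exact le_of_eq ((det m).1 k k' e1 e2)
    · obtain ⟨e, a, r, hd, E, A, R, hE, hA, hR, hkeq⟩ := (hChg_big b c m k hmb).1 hk
      obtain ⟨e', a', r', hd', E', A', R', hE', hA', hR', hkeq'⟩ := (hChg_big b d m k' hmb).1 hk'
      obtain ⟨he, ha, hr⟩ := bdec_uniq b m e a r e' a' r' h2b hd hd'
      subst he; subst ha; subst hr
      have hem : e < m := by
        have h1 : e < 2 ^ e := Nat.lt_two_pow_self
        have h2 := Nat.pow_le_pow_left h2b e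
        have h3 := hd.2.1
        omega
      have hrm : r < m := by have := hd.2.2.2.2.2; have := hd.2.1; omega
      have hAA : A = A' := (det a).1 A A' hA hA'
      have hEE : E ≤ E' := IH e hem c d E E' hc hcd hE hE'
      have hRR : R ≤ R' := IH r hrm c d R R' hc hcd hR hR'
      have hpow : c ^ E ≤ d ^ E' :=
        le_trans (Nat.pow_le_pow_right hc hEE) (Nat.pow_le_pow_left hcd E')
      have hmul : c ^ E * A ≤ d ^ E' * A' := by
        rw [← hAA]
        exact Nat.mul_le_mul hpow le_rfl
      omega
  -- strict monotonicity in the argument (for target bases above Up (b-1)),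
  -- together with the bound Chg b y (b^e - 1) < y ^ (Chg b y e)
  have smono : ∀ y, 2 ≤ y → (∀ p, Up (b - 1) p → p < y) → ∀ M,
      (∀ e v E, M = b ^ e → Chg b y (M - 1) v → Chg b y e E → v < y ^ E) ∧
      (∀ k k', 1 ≤ M → Chg b y (M - 1) k → Chg b y M k' → k < k') := by
    intro y hy2 hPy M
    induction M using Nat.strong_induction_on with
    | _ M IH =>
    have hBND : ∀ e v E, M = b ^ e → Chg b y (M - 1) v → Chg b y e E → v < y ^ E := by
      intro e v E hMe hv hE
      match e with
      | 0 =>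
        have hM : M = 1 := by simpa using hMe
        rw [hM] at hv
        have hv0 : v = 0 := (hup0 v).1 ((hChg_small b y 0 v (by omega)).1 hv)
        have hE0 : E = 0 := (hup0 E).1 ((hChg_small b y 0 E (by omega)).1 hE)
        subst hv0; subst hE0
        simp
      | 1 =>
        have hM : M = b := by simpa using hMe
        rw [hM] at hv
        have hv2 : Up (b - 1) v := (hChg_small b y (b - 1) v (by omega)).1 hv
        have hE1 : E = 1 := (hup1 E).1 ((hChg_small b y 1 E (by omega)).1 hE)
        subst hE1
        simpa using hPy v hv2
      | (e + 2) =>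
        have hq2 : b ≤ b ^ (e + 1) := Nat.le_self_pow (by omega) b
        have hqb : b ^ (e + 2) = b ^ (e + 1) * b := pow_succ b (e + 1)
        have hqpos : 0 < b ^ (e + 1) := pow_pos (by omega) _
        have hM4 : 2 * b ≤ b ^ (e + 1) * b := Nat.mul_le_mul_right b (by omega)
        have hbM1 : b ≤ M - 1 := by omega
        have hmp := mulpred (b ^ (e + 1)) b (by omega) (by omega)
        have hpow11 : b ^ (e + 1 + 1) = b ^ (e + 2) := by norm_num
        have hd' : BDecomp b (M - 1) (e + 1) (b - 1) (b ^ (e + 1) - 1) := by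
          refine ⟨by omega, ?_, by omega, by omega, by omega, by omega⟩
          have h1 : b ^ (e + 1) * 1 ≤ b ^ (e + 1) * (b - 1) :=
            Nat.mul_le_mul_left _ (by omega)
          omega
        obtain ⟨e₂, a₂, r₂, hd₂, E₂, A₂, R₂, hE₂, hA₂, hR₂, hveq⟩ :=
          (hChg_big b y (M - 1) v hbM1).1 hv
        obtain ⟨he2, ha2, hr2⟩ :=
          bdec_uniq b (M - 1) (e + 1) (b - 1) (b ^ (e + 1) - 1) e₂ a₂ r₂ h2b hd' hd₂
        subst he2; subst ha2; subst hr2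
        have hqM : b ^ (e + 1) < M := by
          have h1 : b ^ (e + 1) * 2 ≤ b ^ (e + 1) * b := Nat.mul_le_mul_left _ (by omega)
          omega
        have hR2lt : R₂ < y ^ E₂ := (IH (b ^ (e + 1)) hqM).1 (e + 1) R₂ E₂ rfl hR₂ hE₂
        have hee2M : e + 2 < M := by
          have h1 : e + 2 < 2 ^ (e + 2) := Nat.lt_two_pow_self
          have h2 := Nat.pow_le_pow_left h2b (e + 2)
          omega
        have hE2E : E₂ < E :=
          (IH (e + 2) hee2M).2 E₂ E (by omega) (by simpa using hE₂) hE
        have hA2y : A₂ < y := hPy A₂ hA₂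
        have c1 : v < y ^ E₂ * (A₂ + 1) := by
          have hms : y ^ E₂ * (A₂ + 1) = y ^ E₂ * A₂ + y ^ E₂ := by ring
          omega
        have c2 : y ^ E₂ * (A₂ + 1) ≤ y ^ E₂ * y := Nat.mul_le_mul_left _ (by omega)
        have c3 : y ^ E₂ * y ≤ y ^ E := by
          rw [← pow_succ]
          exact Nat.pow_le_pow_right (by omega) (by omega)
        omega
    refine ⟨hBND, ?_⟩
    intro k k' hM1 hk hk'
    rcases Nat.lt_or_ge M b with hMb | hMb
    · have hk2 : Up (M - 1) k := (hChg_small b y (M - 1) k (by omega)).1 hk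
      have hk'2 : Up M k' := (hChg_small b y M k' hMb).1 hk'
      have hM' : M - 1 + 1 = M := by omega
      exact up_succ_lt (M - 1) k k' hk2 (hM' ▸ hk'2)
    rcases Nat.eq_or_lt_of_le hMb with heq | hlt
    · rw [← heq] at hk hk'
      have hk2 : Up (b - 1) k := (hChg_small b y (b - 1) k (by omega)).1 hk
      have hk'2 : k' = y := chg_at_b_fwd y k' hk'
      have := hPy k hk2
      omega
    · obtain ⟨e, a, r, hd⟩ := bdec_ex b M h2b (by omega)
      obtain ⟨e₂, a₂, r₂, hd₂, E, A, R, hE, hA, hR, hkeq'⟩ :=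
        (hChg_big b y M k' (by omega)).1 hk'
      obtain ⟨he2, ha2, hr2⟩ := bdec_uniq b M e a r e₂ a₂ r₂ h2b hd hd₂
      subst he2; subst ha2; subst hr2
      obtain ⟨hMeq, hpe, hlte, ha0, hab, hrlt⟩ := hd
      have hepos : 1 ≤ e := bdec_epos b M e a r (by omega) ⟨hMeq, hpe, hlte, ha0, hab, hrlt⟩
      have hqpos : 0 < b ^ e := pow_pos (by omega) _
      rcases Nat.eq_zero_or_pos r with hr0 | hrpos
      · subst hr0
        rcases Nat.lt_or_ge a 2 with ha1 | ha2
        · -- a = 1 : M = b ^ e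
          have ha1' : a = 1 := by omega
          subst ha1'
          have hMe : M = b ^ e := by omega
          have hklt : k < y ^ E := hBND e k E hMe hk hE
          have hA1 : A = 1 := (hup1 A).1 hA
          have hR0 : R = 0 := by
            have := (hChg_small b y 0 R (by omega)).1 hR
            exact (hup0 R).1 this
          subst hA1; subst hR0
          omega
        · -- a ≥ 2
          have hmp := mulpred (b ^ e) a (by omega) (by omega)
          have hbq : b ≤ b ^ e := Nat.le_self_pow (by omega) b
          have hd' : BDecomp b (M - 1) e (a - 1) (b ^ e - 1) := by
            refine ⟨by omega, ?_, by omega, by omega, by omega, by omega⟩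
            have h1 : b ^ e * 1 ≤ b ^ e * (a - 1) := Nat.mul_le_mul_left _ (by omega)
            omega
          have hbM1 : b ≤ M - 1 := by
            have h1 : b ^ e * 1 ≤ b ^ e * (a - 1) := Nat.mul_le_mul_left _ (by omega)
            omega
          obtain ⟨e₃, a₃, r₃, hd₃, E₂, A₂, R₂, hE₂, hA₂, hR₂, hkeq⟩ :=
            (hChg_big b y (M - 1) k hbM1).1 hk
          obtain ⟨he3, ha3, hr3⟩ :=
            bdec_uniq b (M - 1) e (a - 1) (b ^ e - 1) e₃ a₃ r₃ h2b hd' hd₃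
          subst he3; subst ha3; subst hr3
          have hEE : E₂ = E := (det e).2 b y E₂ E h2b hE₂ hE
          subst hEE
          have hAA : A₂ < A := by
            refine up_succ_lt (a - 1) A₂ A hA₂ ?_
            rw [show a - 1 + 1 = a by omega]
            exact hA
          have hqM : b ^ e < M := by
            have h1 : b ^ e * 2 ≤ b ^ e * a := Nat.mul_le_mul_left _ (by omega)
            omega
          have hR2lt : R₂ < y ^ E₂ := (IH (b ^ e) hqM).1 e R₂ E₂ rfl hR₂ hE₂
          have hR0 : R = 0 := by
            have := (hChg_small b y 0 R (by omega)).1 hR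
            exact (hup0 R).1 this
          subst hR0
          have c1 : k < y ^ E₂ * (A₂ + 1) := by
            have hms : y ^ E₂ * (A₂ + 1) = y ^ E₂ * A₂ + y ^ E₂ := by ring
            omega
          have c2 : y ^ E₂ * (A₂ + 1) ≤ y ^ E₂ * A := Nat.mul_le_mul_left _ (by omega)
          omega
      · -- r ≥ 1
        have hbq : b ≤ b ^ e := Nat.le_self_pow (by omega) b
        have hq1 : b ^ e * 1 ≤ b ^ e * a := Nat.mul_le_mul_left _ (by omega)
        have hd' : BDecomp b (M - 1) e a (r - 1) := by
          refine ⟨by omega, by omega, by omega, by omega, by omega, by omega⟩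
        have hbM1 : b ≤ M - 1 := by omega
        obtain ⟨e₃, a₃, r₃, hd₃, E₂, A₂, R₂, hE₂, hA₂, hR₂, hkeq⟩ :=
          (hChg_big b y (M - 1) k hbM1).1 hk
        obtain ⟨he3, ha3, hr3⟩ := bdec_uniq b (M - 1) e a (r - 1) e₃ a₃ r₃ h2b hd' hd₃
        subst he3; subst ha3; subst hr3
        have hEE : E₂ = E := (det e).2 b y E₂ E h2b hE₂ hE
        subst hEE
        have hAA : A₂ = A := (det a).1 A₂ A hA₂ hA
        subst hAA
        have hrM : r < M := by omega
        have hRR : R₂ < R := (IH r hrM).2 R₂ R (by omega) hR₂ hR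
        omega
  -- non-strict monotonicity in the argument over a range
  have monoRange : ∀ y, 2 ≤ y → (∀ p, Up (b - 1) p → p < y) →
      (∀ j, j < b → ∃ q, Up j q) →
      ∀ m j k k', j ≤ m → Chg b y j k → Chg b y m k' → k ≤ k' := by
    intro y hy2 hPy hUB m
    induction m with
    | zero =>
      intro j k k' hj hk hk'
      have hj0 : j = 0 := by omega
      subst hj0
      exact le_of_eq ((det 0).2 b y k k' h2b hk hk')
    | succ m ih =>
      intro j k k' hj hk hk'
      rcases Nat.eq_or_lt_of_le hj with he | hlt
      · subst he
        exact le_of_eq ((det (m + 1)).2 b y k k' h2b hk hk')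
      · obtain ⟨km, hkm⟩ := chg_total hUB y m
        have h1 : k ≤ km := ih j k km (by omega) hk hkm
        have h2 : km < k' := (smono y hy2 hPy (m + 1)).2 km k' (by omega) (by simpa using hkm) hk'
        omega
  -- the upward chain: Up is defined along [b, n] and bounded by Chg b y
  have UC : ∀ y, y ∈ C → ∀ cb, IsWitness Up Chg C b b cb → cb ≤ y →
      ∀ kn, Chg b y n kn → (∀ d, SuccIn C y d → kn < d) →
      ∀ m, b ≤ m → m ≤ n → ∃ q km, Up m q ∧ Chg b y m km ∧ q ≤ km := by
    intro y hyC cb hwitb hcby kn hkn hknS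
    have hy2 : 2 ≤ y := hC2 y hyC
    have hUpb : Up b cb :=
      (hUp_big b ⟨b, hbB, le_rfl⟩ b (baseAt b le_rfl hbn) cb).2 ⟨cb, hwitb, chg_at_b_rev cb⟩
    obtain ⟨p0, k0, hp0, hk0, hp0k0, -⟩ := hwitb.2.1
    have hk0cb : k0 = cb := chg_at_b_fwd cb k0 hk0
    have hPy : ∀ p', Up (b - 1) p' → p' < y := by
      intro p' hp'
      have := (det (b - 1)).1 p' p0 hp' hp0
      omega
    have hUB : ∀ j, j < b → ∃ q, Up j q := fun j hj => up_down b cb hUpb j (by omega)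
    intro m hbm
    induction m, hbm using Nat.le_induction with
    | base =>
      intro _
      exact ⟨cb, y, hUpb, chg_at_b_rev y, hcby⟩
    | succ m hbm ih =>
      intro hmn
      obtain ⟨q, km, hq, hkm, hqkm⟩ := ih (by omega)
      obtain ⟨km1, hkm1⟩ := chg_total hUB y (m + 1)
      have hlt : km < km1 :=
        (smono y hy2 hPy (m + 1)).2 km km1 (by omega) (by simpa using hkm) hkm1
      have hkm1S : ∀ d, SuccIn C y d → km1 < d := by
        intro d hd
        have h1 : km1 ≤ kn := monoRange y hy2 hPy hUB n (m + 1) km1 kn hmn hkm1 hkn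
        have := hknS d hd
        omega
      have hgood : ChgGood Up Chg C (m + 1) b y :=
        ⟨q, km1, by simpa using hq, hkm1, by omega, hkm1S⟩
      obtain ⟨c₂, hwit₂⟩ := wit_of_good (m + 1) b y hyC hgood
      obtain ⟨p₂, k₂, hp₂, hk₂, hp₂k₂, hk₂S⟩ := hwit₂.2.1
      have hUpm1 : Up (m + 1) k₂ :=
        (hUp_big (m + 1) ⟨b, hbB, by omega⟩ b (baseAt (m + 1) (by omega) hmn) k₂).2
          ⟨c₂, hwit₂, hk₂⟩
      have hc₂y : c₂ ≤ y := by
        by_contra h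
        push_neg at h
        exact hwit₂.2.2 y hyC h hgood
      have hle : k₂ ≤ km1 :=
        monoBase (m + 1) c₂ y k₂ km1 (by have := hC2 c₂ hwit₂.1; omega) hc₂y hk₂ hkm1
      exact ⟨k₂, km1, hUpm1, hkm1, hle⟩
  -- any y ∈ C with cb ≤ y whose change of base at n is below S_C(y) is good for n
  have goodOf : ∀ y, y ∈ C → ∀ cb, IsWitness Up Chg C b b cb → cb ≤ y →
      ∀ ky, Chg b y n ky → (∀ d, SuccIn C y d → ky < d) → ChgGood Up Chg C n b y := by
    intro y hyC cb hwitb hcby ky hky hkyS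
    have hy2 : 2 ≤ y := hC2 y hyC
    obtain ⟨p0, k0, hp0, hk0, hp0k0, -⟩ := hwitb.2.1
    have hk0cb : k0 = cb := chg_at_b_fwd cb k0 hk0
    have hPy : ∀ p', Up (b - 1) p' → p' < y := by
      intro p' hp'
      have := (det (b - 1)).1 p' p0 hp' hp0
      omega
    rcases Nat.eq_or_lt_of_le hbn with he | hlt
    · subst he
      have hkyy : ky = y := chg_at_b_fwd y ky hky
      exact ⟨p0, ky, hp0, hky, by omega, hkyS⟩
    · obtain ⟨q, km, hq, hkm, hqkm⟩ :=
        UC y hyC cb hwitb hcby ky hky hkyS (n - 1) (by omega) (by omega)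
      have hlt2 : km < ky := by
        refine (smono y hy2 hPy n).2 km ky (by omega) ?_ hky
        exact hkm
      exact ⟨q, ky, hq, hky, by omega, hkyS⟩
  -- Claim A: a witness for n is the least element of the set S
  have claimA : ∀ c, IsWitness Up Chg C n b c →
      IsLeast {x | x ∈ C ∧ (∃ ub, Up b ub ∧ ub ≤ x) ∧
        ∃ k, Chg b x n k ∧ ∀ d, SuccIn C x d → k < d} c := by
    intro c hwit
    obtain ⟨hcC, hgood, hmin'⟩ := hwit
    obtain ⟨p, k, hp, hk, hpk, hkS⟩ := hgood
    have hcbEx : ∃ cb, IsWitness Up Chg C b b cb := by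
      rcases Nat.eq_or_lt_of_le hbn with he | hlt
      · have hw : IsWitness Up Chg C n b c := ⟨hcC, ⟨p, k, hp, hk, hpk, hkS⟩, hmin'⟩
        rw [← he] at hw
        exact ⟨c, hw⟩
      · obtain ⟨q, hq⟩ := up_down (n - 1) p hp b (by omega)
        obtain ⟨cb, hwitb, -⟩ := (hUp_big b ⟨b, hbB, le_rfl⟩ b (baseAt b le_rfl hbn) q).1 hq
        exact ⟨cb, hwitb⟩
    obtain ⟨cb, hwitb⟩ := hcbEx
    have hUpb : Up b cb :=
      (hUp_big b ⟨b, hbB, le_rfl⟩ b (baseAt b le_rfl hbn) cb).2 ⟨cb, hwitb, chg_at_b_rev cb⟩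
    have hcb_le : cb ≤ c := G n hbn le_rfl c hcC ⟨p, k, hp, hk, hpk, hkS⟩ cb hwitb
    refine ⟨⟨hcC, ⟨cb, hUpb, hcb_le⟩, ⟨k, hk, hkS⟩⟩, ?_⟩
    intro y hyS
    obtain ⟨hyC, ⟨ub, hub, huby⟩, ky, hky, hkyS⟩ := hyS
    have hub_cb : ub = cb := (det b).1 ub cb hub hUpb
    by_contra hlt
    push_neg at hlt
    exact hmin' y hyC hlt (goodOf y hyC cb hwitb (by omega) ky hky hkyS)
  -- Claim B: the least element of S is a witness for n
  have claimB : ∀ c', IsLeast {x | x ∈ C ∧ (∃ ub, Up b ub ∧ ub ≤ x) ∧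
      ∃ k, Chg b x n k ∧ ∀ d, SuccIn C x d → k < d} c' →
      IsWitness Up Chg C n b c' := by
    intro c' hleast
    obtain ⟨⟨hc'C, ⟨ub, hub, hubc⟩, k', hk', hS'⟩, hlb⟩ := hleast
    obtain ⟨cb, hwitb, hchgb⟩ := (hUp_big b ⟨b, hbB, le_rfl⟩ b (baseAt b le_rfl hbn) ub).1 hub
    have hub_cb : ub = cb := chg_at_b_fwd cb ub hchgb
    have hUpb : Up b cb :=
      (hUp_big b ⟨b, hbB, le_rfl⟩ b (baseAt b le_rfl hbn) cb).2 ⟨cb, hwitb, chg_at_b_rev cb⟩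
    refine ⟨hc'C, goodOf c' hc'C cb hwitb (by omega) k' hk' hS', ?_⟩
    intro x hxC hxlt hgx
    have hcbx : cb ≤ x := G n hbn le_rfl x hxC hgx cb hwitb
    obtain ⟨px, kx, hpx, hkx, hpxkx, hkxS⟩ := hgx
    have hxS : x ∈ {x | x ∈ C ∧ (∃ ub, Up b ub ∧ ub ≤ x) ∧
        ∃ k, Chg b x n k ∧ ∀ d, SuccIn C x d → k < d} :=
      ⟨hxC, ⟨cb, hUpb, hcbx⟩, ⟨kx, hkx, hkxS⟩⟩
    have := hlb hxS
    omega
  constructor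
  · constructor
    · rintro ⟨c, hc⟩
      exact ⟨c, claimA c hc⟩
    · rintro ⟨c', hc'⟩
      exact ⟨c', claimB c' hc'⟩
  · intro c c' hc hc'
    exact le_antisymm (hc'.2 (claimA c hc).1) ((claimA c hc).2 hc'.1)
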